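/- Let w, n be positive integers and E a Dedekind symbol of weight w. Then T_n^∞ E defined by (T_n^∞ E)(h,k) = Σ_{ad=n, d>0} Σ_{b=0}^{d−1} E(dh, ak+bh) is again a Dedekind symbol of weight w: it satisfies (T_n^∞ E)(h, k+h) = (T_n^∞ E)(h,k) and (T_n^∞ E)(ch,ck) = c^w (T_n^∞ E)(h,k) for all positive integers c. -/

import Mathlib

lemma shift_sum_aux (d : ℕ) (hd : 0 < d) (f : ℕ → ℂ) (hf : ∀ b, f (b + d) = f b) :
    ∀ a, ∑ b ∈ Finset.range d, f (b + a) = ∑ b ∈ Finset.range d, f b := by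
  have one_step : ∀ g : ℕ → ℂ, (∀ b, g (b + d) = g b) →
      ∑ b ∈ Finset.range d, g (b + 1) = ∑ b ∈ Finset.range d, g b := by
    intro g hg
    obtain ⟨d', rfl⟩ := Nat.exists_eq_succ_of_ne_zero hd.ne'
    rw [Finset.sum_range_succ (fun b => g (b + 1)), Finset.sum_range_succ' g]
    have : g (d' + 1) = g 0 := by simpa using hg 0
    rw [this]
  intro a
  induction a with
  | zero => simp
  | succ a ih =>
    have h1 : ∑ b ∈ Finset.range d, f (b + (a + 1)) =
        ∑ b ∈ Finset.range d, (fun b => f (b + a)) (b + 1) := by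
      apply Finset.sum_congr rfl
      intro b _
      simp [add_assoc, add_comm 1 a]
    rw [h1, one_step (fun b => f (b + a)) (fun b => by
      simpa [add_right_comm] using hf (b + a))]
    exact ih

theorem stmt_9 (w n : ℕ) (hw : 0 < w) (hn : 0 < n) (E : ℤ → ℤ → ℂ)
    (hper : ∀ h k : ℤ, 0 < h → E h (k + h) = E h k)
    (hhom : ∀ c h k : ℤ, 0 < c → 0 < h → E (c * h) (c * k) = (c : ℂ) ^ w * E h k)
    (TE : ℤ → ℤ → ℂ)
    (hTE : ∀ h k : ℤ, TE h k = ∑ d ∈ n.divisors, ∑ b ∈ Finset.range d,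
      E ((d : ℤ) * h) (((n / d : ℕ) : ℤ) * k + (b : ℤ) * h)) :
    (∀ h k : ℤ, 0 < h → TE h (k + h) = TE h k) ∧
    (∀ c h k : ℤ, 0 < c → 0 < h → TE (c * h) (c * k) = (c : ℂ) ^ w * TE h k) := by
  constructor
  · intro h k hh
    rw [hTE, hTE]
    refine Finset.sum_congr rfl fun d hd => ?_
    have hdpos : 0 < d := Nat.pos_of_mem_divisors hd
    set m := n / d with hm
    have hdh : (0 : ℤ) < (d : ℤ) * h := by positivity
    have hperiod : ∀ b : ℕ, E ((d : ℤ) * h) ((m : ℤ) * k + ((b + d : ℕ) : ℤ) * h)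
        = E ((d : ℤ) * h) ((m : ℤ) * k + (b : ℤ) * h) := by
      intro b
      have := hper ((d : ℤ) * h) ((m : ℤ) * k + (b : ℤ) * h) hdh
      rw [← this]
      push_cast
      ring_nf
    have key := shift_sum_aux d hdpos
      (fun b => E ((d : ℤ) * h) ((m : ℤ) * k + (b : ℤ) * h)) hperiod m
    have hrw : ∀ b : ℕ, E ((d : ℤ) * h) ((m : ℤ) * (k + h) + (b : ℤ) * h)
        = E ((d : ℤ) * h) ((m : ℤ) * k + ((b + m : ℕ) : ℤ) * h) := by
      intro b; push_cast; ring_nf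
    simp only [hrw]
    exact key
  · intro c h k hc hh
    rw [hTE, hTE, Finset.mul_sum]
    refine Finset.sum_congr rfl fun d hd => ?_
    rw [Finset.mul_sum]
    refine Finset.sum_congr rfl fun b _ => ?_
    have hdpos : 0 < d := Nat.pos_of_mem_divisors hd
    have h1 : (d : ℤ) * (c * h) = c * ((d : ℤ) * h) := by ring
    have h2 : ((n / d : ℕ) : ℤ) * (c * k) + (b : ℤ) * (c * h)
        = c * (((n / d : ℕ) : ℤ) * k + (b : ℤ) * h) := by ring
    rw [h1, h2, hhom c _ _ hc (by positivity)]
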